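/- Let A, B ∈ ℝ with B² ≤ 2A, and set h(t) := A·t²/2 + B·t + 1. If for every compactly supported C¹ function φ : ℝ → ℝ one has ∫_ℝ φ'(t)² h(t) dt ≥ (2A − B²) ∫_ℝ φ(t)² / h(t) dt, then B² = 2A. -/

import Mathlib

open MeasureTheory Filter Set

/-- The function `x ↦ (max x 0)^2` and its derivative. -/
noncomputable def maxsq (x : ℝ) : ℝ := (max x 0) ^ 2

lemma maxsq_hasDerivAt (x : ℝ) : HasDerivAt maxsq (2 * max x 0) x := by
  rcases lt_trichotomy x 0 with hx | hx | hx
  · have h0 : maxsq =ᶠ[nhds x] fun _ => (0 : ℝ) := by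
      filter_upwards [eventually_lt_nhds hx] with y hy
      simp [maxsq, max_eq_right hy.le]
    rw [max_eq_right hx.le, mul_zero]
    exact (hasDerivAt_const x (0 : ℝ)).congr_of_eventuallyEq h0
  · subst hx
    rw [max_self, mul_zero]
    rw [hasDerivAt_iff_tendsto_slope]
    have hb : ∀ᶠ y in nhdsWithin (0 : ℝ) {(0 : ℝ)}ᶜ, ‖slope maxsq 0 y‖ ≤ |y| := by
      filter_upwards [self_mem_nhdsWithin] with y hy
      have hy0 : y ≠ 0 := hy
      have h1 : |max y 0| ≤ |y| := by
        rcases le_or_gt y 0 with h | h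
        · simp [max_eq_right h]
        · simp [max_eq_left h.le]
      have h2 : ‖slope maxsq 0 y‖ = (max y 0) ^ 2 / |y| := by
        rw [slope_def_field, maxsq]
        simp [maxsq, abs_div, abs_of_nonneg (sq_nonneg (max y 0))]
      rw [h2, div_le_iff₀ (abs_pos.2 hy0)]
      calc (max y 0) ^ 2 = |max y 0| * |max y 0| := by
            rw [← abs_mul, abs_of_nonneg (mul_self_nonneg _), sq]
        _ ≤ |y| * |y| := mul_le_mul h1 h1 (abs_nonneg _) (abs_nonneg _)
    have ht : Tendsto (fun y : ℝ => |y|) (nhdsWithin (0 : ℝ) {(0 : ℝ)}ᶜ) (nhds 0) := by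
      have : Tendsto (fun y : ℝ => |y|) (nhds 0) (nhds |0|) := continuous_abs.tendsto 0
      simpa using this.mono_left nhdsWithin_le_nhds
    exact squeeze_zero_norm' hb ht
  · have h0 : maxsq =ᶠ[nhds x] fun y => y ^ 2 := by
      filter_upwards [eventually_gt_nhds hx] with y hy
      simp [maxsq, max_eq_left hy.le]
    rw [max_eq_left hx.le]
    have h1 := (hasDerivAt_pow 2 x).congr_of_eventuallyEq h0
    refine h1.congr_deriv ?_
    simp

/-- The bump function `u ↦ (max (25/4 - u²) 0)²`. -/
noncomputable def bump (u : ℝ) : ℝ := maxsq (25 / 4 - u ^ 2)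

lemma bump_hasDerivAt (u : ℝ) :
    HasDerivAt bump (-4 * u * max (25 / 4 - u ^ 2) 0) u := by
  have hin : HasDerivAt (fun u : ℝ => 25 / 4 - u ^ 2) (-(2 * u)) u := by
    have := (hasDerivAt_pow 2 u).const_sub (25 / 4 : ℝ)
    simpa using this
  have h2 := (maxsq_hasDerivAt (25 / 4 - u ^ 2)).comp u hin
  refine h2.congr_deriv ?_
  ring

lemma bump_deriv : deriv bump = fun u => -4 * u * max (25 / 4 - u ^ 2) 0 :=
  funext fun u => (bump_hasDerivAt u).deriv

lemma bump_contDiff : ContDiff ℝ 1 bump := by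
  rw [contDiff_one_iff_deriv]
  refine ⟨fun u => (bump_hasDerivAt u).differentiableAt, ?_⟩
  rw [bump_deriv]
  exact (continuous_const.mul continuous_id).mul
    ((continuous_const.sub (continuous_pow 2)).max continuous_const)

lemma bump_eq_zero {u : ℝ} (hu : 25 / 4 - u ^ 2 ≤ 0) : bump u = 0 := by
  simp [bump, maxsq, max_eq_right hu]

lemma bump_hcs : HasCompactSupport bump := by
  apply HasCompactSupport.intro (isCompact_Icc (a := -(5 / 2 : ℝ)) (b := 5 / 2))
  intro u hu
  simp only [Set.mem_Icc, not_and_or, not_le] at hu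
  apply bump_eq_zero
  rcases hu with h | h <;> nlinarith

/-- Reduce an integral over ℝ of a function vanishing outside `[-5/2, 5/2]`
to an interval integral. -/
lemma integral_eq_interval {f : ℝ → ℝ} (hf : ∀ u : ℝ, 25 / 4 - u ^ 2 ≤ 0 → f u = 0) :
    ∫ u, f u = ∫ u in (-(5 / 2 : ℝ))..(5 / 2 : ℝ), f u := by
  rw [intervalIntegral.integral_of_le (by norm_num)]
  refine (setIntegral_eq_integral_of_forall_compl_eq_zero fun u hu => ?_).symm
  simp only [Set.mem_Ioc, not_and_or, not_lt, not_le] at hu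
  apply hf
  rcases hu with h | h <;> nlinarith

/-- Value of `∫ (bump')² (1 + u²)`. -/
lemma I1_val :
    ∫ u : ℝ, (-4 * u * max (25 / 4 - u ^ 2) 0) ^ 2 * (1 + u ^ 2) = 578125 / 126 := by
  rw [integral_eq_interval (fun u hu => by rw [max_eq_right hu]; ring)]
  rw [intervalIntegral.integral_congr
      (g := fun u : ℝ => 625 * u ^ 2 + 425 * u ^ 4 - 184 * u ^ 6 + 16 * u ^ 8) ?_]
  · have hF : ∀ u : ℝ, HasDerivAt
        (fun x : ℝ => 625 / 3 * x ^ 3 + 85 * x ^ 5 - 184 / 7 * x ^ 7 + 16 / 9 * x ^ 9)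
        (625 * u ^ 2 + 425 * u ^ 4 - 184 * u ^ 6 + 16 * u ^ 8) u := by
      intro u
      have h3 := (hasDerivAt_pow 3 u).const_mul (625 / 3 : ℝ)
      have h5 := (hasDerivAt_pow 5 u).const_mul (85 : ℝ)
      have h7 := (hasDerivAt_pow 7 u).const_mul (184 / 7 : ℝ)
      have h9 := (hasDerivAt_pow 9 u).const_mul (16 / 9 : ℝ)
      refine (((h3.add h5).sub h7).add h9).congr_deriv ?_
      push_cast
      ring
    rw [intervalIntegral.integral_eq_sub_of_hasDerivAt (fun u _ => hF u)
      ((Continuous.intervalIntegrable (by continuity) _ _))]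
    norm_num
  · intro u hu
    rw [Set.uIcc_of_le (by norm_num)] at hu
    obtain ⟨h1, h2⟩ := hu
    have hpos : (0 : ℝ) ≤ 25 / 4 - u ^ 2 := by nlinarith
    simp only [max_eq_left hpos]
    ring

/-- The polynomial lower bound for `1/(1+u²)`. -/
noncomputable def Pl (u : ℝ) : ℝ :=
  42175 / 43264 - 33925 / 43264 * u ^ 2 + 1875 / 5408 * u ^ 4 - 625 / 10816 * u ^ 6

lemma Pl_le (u : ℝ) : Pl u * (1 + u ^ 2) ≤ 1 := by
  unfold Pl
  nlinarith [sq_nonneg ((u ^ 2 - 3 / 10) * (u ^ 2 - 11 / 5))]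

/-- Value of `∫ bump² · Pl`. -/
lemma Ilb_val : ∫ u : ℝ, bump u ^ 2 * Pl u = 3070888671875 / 1385832448 := by
  rw [integral_eq_interval (fun u hu => by rw [bump_eq_zero hu]; ring)]
  rw [intervalIntegral.integral_congr
      (g := fun u : ℝ => (25 / 4 - u ^ 2) ^ 4 *
        (42175 / 43264 - 33925 / 43264 * u ^ 2 + 1875 / 5408 * u ^ 4 - 625 / 10816 * u ^ 6)) ?_]
  · have hF : ∀ u : ℝ, HasDerivAt
        (fun x : ℝ => 16474609375 / 11075584 * x - 23795703125 / 33226752 * x ^ 3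
          + 421778125 / 1384448 * x ^ 5 - 1757995625 / 19382272 * x ^ 7
          + 9129775 / 519168 * x ^ 9 - 1989725 / 951808 * x ^ 11
          + 19375 / 140608 * x ^ 13 - 125 / 32448 * x ^ 15)
        ((25 / 4 - u ^ 2) ^ 4 *
          (42175 / 43264 - 33925 / 43264 * u ^ 2 + 1875 / 5408 * u ^ 4 - 625 / 10816 * u ^ 6)) u := by
      intro u
      have h1 := (hasDerivAt_id u).const_mul (16474609375 / 11075584 : ℝ)
      have h3 := (hasDerivAt_pow 3 u).const_mul (23795703125 / 33226752 : ℝ)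
      have h5 := (hasDerivAt_pow 5 u).const_mul (421778125 / 1384448 : ℝ)
      have h7 := (hasDerivAt_pow 7 u).const_mul (1757995625 / 19382272 : ℝ)
      have h9 := (hasDerivAt_pow 9 u).const_mul (9129775 / 519168 : ℝ)
      have h11 := (hasDerivAt_pow 11 u).const_mul (1989725 / 951808 : ℝ)
      have h13 := (hasDerivAt_pow 13 u).const_mul (19375 / 140608 : ℝ)
      have h15 := (hasDerivAt_pow 15 u).const_mul (125 / 32448 : ℝ)
      refine ((((((((h1.sub h3).add h5).sub h7).add h9).sub h11).add h13).sub h15)).congr_deriv ?_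
      push_cast
      ring
    rw [intervalIntegral.integral_eq_sub_of_hasDerivAt (fun u _ => hF u)
      ((Continuous.intervalIntegrable (by continuity) _ _))]
    norm_num
  · intro u hu
    rw [Set.uIcc_of_le (by norm_num)] at hu
    obtain ⟨h1, h2⟩ := hu
    have hpos : (0 : ℝ) ≤ 25 / 4 - u ^ 2 := by nlinarith
    simp only [bump, maxsq, max_eq_left hpos, Pl]
    ring

lemma bump_sq_div_integrable : Integrable (fun u : ℝ => bump u ^ 2 / (1 + u ^ 2)) := by
  apply Continuous.integrable_of_hasCompactSupport
  · exact ((bump_contDiff.continuous.pow 2).div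
      (continuous_const.add (continuous_pow 2)) (fun u => by positivity))
  · apply HasCompactSupport.intro (isCompact_Icc (a := -(5 / 2 : ℝ)) (b := 5 / 2))
    intro u hu
    simp only [Set.mem_Icc, not_and_or, not_le] at hu
    have hb : bump u = 0 := by apply bump_eq_zero; rcases hu with h | h <;> nlinarith
    rw [hb]
    simp

lemma bump_sq_Pl_integrable : Integrable (fun u : ℝ => bump u ^ 2 * Pl u) := by
  apply Continuous.integrable_of_hasCompactSupport
  · exact (bump_contDiff.continuous.pow 2).mul (by unfold Pl; continuity)
  · apply HasCompactSupport.intro (isCompact_Icc (a := -(5 / 2 : ℝ)) (b := 5 / 2))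
    intro u hu
    simp only [Set.mem_Icc, not_and_or, not_le] at hu
    have hb : bump u = 0 := by apply bump_eq_zero; rcases hu with h | h <;> nlinarith
    rw [hb]
    simp

lemma I2_ge : (3070888671875 / 1385832448 : ℝ) ≤ ∫ u : ℝ, bump u ^ 2 / (1 + u ^ 2) := by
  rw [← Ilb_val]
  apply integral_mono bump_sq_Pl_integrable bump_sq_div_integrable
  intro u
  show bump u ^ 2 * Pl u ≤ bump u ^ 2 / (1 + u ^ 2)
  have h1 : (0 : ℝ) < 1 + u ^ 2 := by positivity
  rw [le_div_iff₀ h1]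
  have h2 := mul_le_mul_of_nonneg_left (Pl_le u) (sq_nonneg (bump u))
  nlinarith [h2]

/-- Rigidity for the Hardy-type inequality: if ∫ φ'² h ≥ (2A − B²) ∫ φ²/h for all
compactly supported C¹ functions φ, with h(t)=At²/2+Bt+1 and B² ≤ 2A, then B² = 2A. -/
theorem stmt_4 (A B : ℝ) (hAB : B ^ 2 ≤ 2 * A)
    (h : ℝ → ℝ) (hdef : ∀ t, h t = A * t ^ 2 / 2 + B * t + 1)
    (hineq : ∀ φ : ℝ → ℝ, ContDiff ℝ 1 φ → HasCompactSupport φ →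
      (2 * A - B ^ 2) * ∫ t, φ t ^ 2 / h t ≤ ∫ t, (deriv φ t) ^ 2 * h t) :
    B ^ 2 = 2 * A := by
  by_contra hne
  have hlt : B ^ 2 < 2 * A := lt_of_le_of_ne hAB hne
  have hA : 0 < A := by nlinarith [sq_nonneg B]
  set k : ℝ := Real.sqrt (2 * A - B ^ 2) with hkdef
  have hk0 : 0 < k := Real.sqrt_pos.2 (by linarith)
  have hk2 : k ^ 2 = 2 * A - B ^ 2 := Real.sq_sqrt (by linarith)
  have hkne : k ≠ 0 := ne_of_gt hk0
  have hAne : A ≠ 0 := ne_of_gt hA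
  set c : ℝ := A / k with hcdef
  have hc : 0 < c := div_pos hA hk0
  have hcne : c ≠ 0 := ne_of_gt hc
  set φ : ℝ → ℝ := fun t => bump (c * t + B / k) with hφdef
  -- affine map facts
  have haff : ∀ t : ℝ, HasDerivAt (fun t : ℝ => c * t + B / k) c t := by
    intro t
    simpa using ((hasDerivAt_id t).const_mul c).add_const (B / k)
  have hφC1 : ContDiff ℝ 1 φ :=
    bump_contDiff.comp ((contDiff_const.mul contDiff_id).add contDiff_const)
  have hφderiv : ∀ t : ℝ, HasDerivAt φ
      ((-4 * (c * t + B / k) * max (25 / 4 - (c * t + B / k) ^ 2) 0) * c) t := by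
    intro t
    exact HasDerivAt.comp (h₂ := bump) t (bump_hasDerivAt (c * t + B / k)) (haff t)
  have hφcs : HasCompactSupport φ := by
    apply HasCompactSupport.intro
      (isCompact_Icc (a := ((-(5 / 2) - B / k) / c : ℝ)) (b := ((5 / 2 - B / k) / c : ℝ)))
    intro t ht
    simp only [Set.mem_Icc, not_and_or, not_le] at ht
    apply bump_eq_zero
    rcases ht with h1 | h1
    · have h2 : t * c < -(5 / 2) - B / k := (lt_div_iff₀ hc).1 h1
      rw [mul_comm] at h2
      have h3 : c * t + B / k < -(5 / 2) := by linarith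
      nlinarith [h3, sq_nonneg (c * t + B / k + 5 / 2)]
    · have h2 : 5 / 2 - B / k < t * c := (div_lt_iff₀ hc).1 h1
      rw [mul_comm] at h2
      have h3 : (5 / 2 : ℝ) < c * t + B / k := by linarith
      nlinarith [h3, sq_nonneg (c * t + B / k - 5 / 2)]
  -- pointwise identity for h
  have hu2 : ∀ t : ℝ, h t = k ^ 2 / (2 * A) * (1 + (c * t + B / k) ^ 2) := by
    intro t
    rw [hdef t]
    have e1 : c * t + B / k = (A * t + B) / k := by rw [hcdef]; ring
    have hne2 : 2 * A - B ^ 2 ≠ 0 := by linarith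
    rw [e1, div_pow, hk2]
    field_simp
    have hne3 : A * 2 - B ^ 2 ≠ 0 := by linarith
    field_simp
    ring
  set G1 : ℝ → ℝ := fun u => A / 2 * ((-4 * u * max (25 / 4 - u ^ 2) 0) ^ 2 * (1 + u ^ 2))
    with hG1def
  set G2 : ℝ → ℝ := fun u => 2 * A / k ^ 2 * (bump u ^ 2 / (1 + u ^ 2)) with hG2def
  have hck : c ^ 2 * (k ^ 2 / (2 * A)) = A / 2 := by
    rw [hcdef]
    field_simp
  have key1 : ∀ t : ℝ, (deriv φ t) ^ 2 * h t = G1 (c * t + B / k) := by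
    intro t
    rw [(hφderiv t).deriv, hu2 t, hG1def]
    show _ = A / 2 * ((-4 * (c * t + B / k) * max (25 / 4 - (c * t + B / k) ^ 2) 0) ^ 2
      * (1 + (c * t + B / k) ^ 2))
    linear_combination (16 * (c * t + B / k) ^ 2 *
      (max (25 / 4 - (c * t + B / k) ^ 2) 0) ^ 2 * (1 + (c * t + B / k) ^ 2)) * hck
  have key2 : ∀ t : ℝ, φ t ^ 2 / h t = G2 (c * t + B / k) := by
    intro t
    rw [hφdef, hu2 t, hG2def]
    show bump (c * t + B / k) ^ 2 / (k ^ 2 / (2 * A) * (1 + (c * t + B / k) ^ 2))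
      = 2 * A / k ^ 2 * (bump (c * t + B / k) ^ 2 / (1 + (c * t + B / k) ^ 2))
    have h1 : (1 + (c * t + B / k) ^ 2) ≠ 0 := by positivity
    field_simp
  -- change of variables
  have shift : ∀ G : ℝ → ℝ, (∫ t : ℝ, G (c * t + B / k)) = (k / A) * ∫ u, G u := by
    intro G
    have e1 : (∫ t : ℝ, G (c * t + B / k))
        = ∫ t : ℝ, (fun s => G (c * s)) (t + B / (k * c)) := by
      congr 1
      funext t
      show G (c * t + B / k) = G (c * (t + B / (k * c)))
      congr 1
      field_simp
    rw [e1, integral_add_right_eq_self (fun s => G (c * s)) (B / (k * c)),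
      MeasureTheory.Measure.integral_comp_mul_left G c]
    rw [abs_of_pos (inv_pos.2 hc), smul_eq_mul]
    congr 1
    rw [hcdef, inv_div]
  have hI := hineq φ hφC1 hφcs
  have e2 : (∫ t, (deriv φ t) ^ 2 * h t) = (k / A) * ((A / 2) * (578125 / 126)) := by
    have e0 : (∫ t, (deriv φ t) ^ 2 * h t) = ∫ t, G1 (c * t + B / k) := by
      congr 1
      funext t
      exact key1 t
    rw [e0, shift G1, hG1def, MeasureTheory.integral_const_mul, I1_val]
  have e3 : (∫ t, φ t ^ 2 / h t) =
      (k / A) * ((2 * A / k ^ 2) * ∫ u : ℝ, bump u ^ 2 / (1 + u ^ 2)) := by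
    have e0 : (∫ t, φ t ^ 2 / h t) = ∫ t, G2 (c * t + B / k) := by
      congr 1
      funext t
      exact key2 t
    rw [e0, shift G2, hG2def, MeasureTheory.integral_const_mul]
  rw [e2, e3] at hI
  have hI2 := I2_ge
  set I2 : ℝ := ∫ u : ℝ, bump u ^ 2 / (1 + u ^ 2) with hI2def
  have lhs_eq : (2 * A - B ^ 2) * ((k / A) * ((2 * A / k ^ 2) * I2)) = 2 * k * I2 := by
    rw [← hk2]
    field_simp
  have rhs_eq : (k / A) * ((A / 2) * (578125 / 126 : ℝ)) = k / 2 * (578125 / 126) := by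
    field_simp
  rw [lhs_eq, rhs_eq] at hI
  nlinarith [hI, hk0, mul_le_mul_of_nonneg_left hI2 hk0.le]
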